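/- arXiv:2510.24423 — 2 statements merged into one kernel-verified Lean document; each statement's English description precedes it below -/
import Mathlib

section
/- Every Lorentzian metric space (X,d) with no chronological boundary is non-partial imprisoning: if γ : [0,b) → X is a future inextendible isocausal curve (it has no future endpoint) and C ⊆ X is compact, then there is no sequence b_k → b with b_k < b and γ(b_k) ∈ C for all k; and the time-reversed statement holds for past inextendible isocausal curves. -/
open Filter Topology Set

variable {X : Type*}

/-- Axiom (ii) of a Lorentzian metric space, relative to a given topology `T`:
`d` is continuous and, for all `x y` and `ε > 0`, the set
`I_ε ∩ (closure (I(x,y)) × closure (I(x,y)))` is compact. -/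
def LMSAxiom2 (T : TopologicalSpace X) (d : X → X → ℝ) : Prop :=
  letI := T
  Continuous (fun p : X × X => d p.1 p.2) ∧
    ∀ x y : X, ∀ ε : ℝ, 0 < ε →
      IsCompact ({p : X × X | ε ≤ d p.1 p.2} ∩
        (closure {z : X | 0 < d x z ∧ 0 < d z y} ×ˢ closure {z : X | 0 < d x z ∧ 0 < d z y}))

/-- Lorentzian metric space (LMS): `d ≥ 0`, reverse triangle inequality,
axiom (ii) for the topology `T`, and `d` distinguishes points. -/
def IsLMS (T : TopologicalSpace X) (d : X → X → ℝ) : Prop :=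
  (∀ x y : X, 0 ≤ d x y) ∧
  (∀ x y z : X, 0 < d x y → 0 < d y z → d x y + d y z ≤ d x z) ∧
  LMSAxiom2 T d ∧
  (∀ x y : X, x ≠ y → ∃ z : X, d x z ≠ d y z ∨ d z x ≠ d z y)

/-- No chronological boundary: `I(X) = X`. -/
def NoBoundary (d : X → X → ℝ) : Prop :=
  ∀ x : X, (∃ p, 0 < d p x) ∧ (∃ q, 0 < d x q)

/-- Countably generated: some countable set `G` satisfies `I(G) = X`. -/
def CountablyGenerated (d : X → X → ℝ) : Prop :=
  ∃ G : Set X, G.Countable ∧ ∀ x : X, (∃ p ∈ G, 0 < d p x) ∧ (∃ q ∈ G, 0 < d x q)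

/-- The causal relation `J` defined from the Lorentzian distance. -/
def Jrel (d : X → X → ℝ) (x y : X) : Prop :=
  ∀ p : X, d p x ≤ d p y ∧ d y p ≤ d x p

/-- Strict causal relation: `x < y`. -/
def CausalLt (d : X → X → ℝ) (x y : X) : Prop :=
  Jrel d x y ∧ x ≠ y

/-- An isocausal curve with parameter domain `S`. -/
def IsIsocausalOn (T : TopologicalSpace X) (d : X → X → ℝ) (γ : ℝ → X) (S : Set ℝ) : Prop :=
  letI := T
  ContinuousOn γ S ∧ ∀ s ∈ S, ∀ t ∈ S, s < t → CausalLt d (γ s) (γ t)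

/-- A maximizing curve on the domain `S`. -/
def MaximizingOn (d : X → X → ℝ) (γ : ℝ → X) (S : Set ℝ) : Prop :=
  ∀ t ∈ S, ∀ t' ∈ S, ∀ t'' ∈ S, t < t' → t' < t'' →
    d (γ t) (γ t') + d (γ t') (γ t'') = d (γ t) (γ t'')

/-- A time function: continuous and strictly increasing on causal pairs. -/
def IsTimeFunction (T : TopologicalSpace X) (d : X → X → ℝ) (τ : X → ℝ) : Prop :=
  letI := T
  Continuous τ ∧ ∀ x y : X, CausalLt d x y → τ x < τ y

theorem lms_key (T : TopologicalSpace X) (d : X → X → ℝ)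
    (h : IsLMS T d) (hnb : NoBoundary d)
    (b : EReal) (hb : (0 : EReal) < b)
    (γ : ℝ → X) (hγ : IsIsocausalOn T d γ {t : ℝ | 0 ≤ t ∧ (t : EReal) < b})
    (hne : letI := T; ¬∃ p : X, Filter.Tendsto γ
      (Filter.comap (fun t : ℝ => (t : EReal)) (𝓝[<] b)) (𝓝 p))
    (C : Set X) (hC : letI := T; IsCompact C) :
    ¬∃ bk : ℕ → ℝ, (∀ k, 0 ≤ bk k ∧ (bk k : EReal) < b) ∧
      Filter.Tendsto (fun k => (bk k : EReal)) Filter.atTop (𝓝 b) ∧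
      ∀ k, γ (bk k) ∈ C := by
  letI := T
  obtain ⟨hd0, htri, ⟨hdc, hcpt⟩, hsep⟩ := h
  rintro ⟨bk, hbk, hbkt, hbkC⟩
  set S : Set ℝ := {t : ℝ | 0 ≤ t ∧ (t : EReal) < b} with hS
  set F : Filter ℝ := Filter.comap (fun t : ℝ => (t : EReal)) (𝓝[<] b) with hF
  have hdc1 : ∀ w : X, Continuous fun z => d w z := fun w => hdc.comp (Continuous.prodMk_right w)
  have hdc2 : ∀ w : X, Continuous fun z => d z w :=
    fun w => hdc.comp (continuous_id.prodMk continuous_const)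
  -- the sequence tends to b from the left
  have hFt : Tendsto (fun k => (bk k : EReal)) atTop (𝓝[<] b) :=
    tendsto_nhdsWithin_of_tendsto_nhds_of_eventually_within _ hbkt
      (Eventually.of_forall fun k => (hbk k).2)
  have hFne : F.NeBot := by
    rw [hF, comap_neBot_iff]
    intro s hs
    have h' : ∀ᶠ k in atTop, ((bk k : EReal)) ∈ s := mem_map.mp (hFt hs)
    obtain ⟨k, hk⟩ := h'.exists
    exact ⟨bk k, hk⟩
  -- eventual membership in the domain past any point of the domain
  have hmemF : ∀ t₀ ∈ S, ∀ᶠ t in F, t₀ < t ∧ t ∈ S := by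
    intro t₀ ht₀
    have hIoo : Ioo (t₀ : EReal) b ∈ 𝓝[<] b := Ioo_mem_nhdsLT ht₀.2
    have hpre : (fun t : ℝ => (t : EReal)) ⁻¹' Ioo (t₀ : EReal) b ∈ F := preimage_mem_comap hIoo
    filter_upwards [hpre] with t ht
    have h1 : t₀ < t := EReal.coe_lt_coe_iff.mp ht.1
    exact ⟨h1, ht₀.1.trans h1.le, ht.2⟩
  -- cluster point of the imprisoned sequence
  have hGne' : (Filter.map (fun k => γ (bk k)) atTop).NeBot := map_neBot
  have hxle : Filter.map (fun k => γ (bk k)) atTop ≤ 𝓟 C :=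
    le_principal_iff.mpr (mem_map.mpr (Eventually.of_forall hbkC))
  obtain ⟨p, hpC, hp⟩ := hC hxle
  obtain ⟨⟨qm, hqm⟩, ⟨qp, hqp⟩⟩ := hnb p
  set δ : ℝ := min (d qm p) (d p qp) / 2 with hδdef
  have hδ : 0 < δ := by
    have := lt_min hqm hqp
    positivity
  have hδm : δ < d qm p := lt_of_lt_of_le (by simpa using (half_lt_self (lt_min hqm hqp)))
    (min_le_left _ _)
  have hδp : δ < d p qp := lt_of_lt_of_le (by simpa using (half_lt_self (lt_min hqm hqp)))
    (min_le_right _ _)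
  -- frequently the sequence enters the open set U
  have hUopen : IsOpen {z : X | δ < d qm z ∧ δ < d z qp} :=
    (isOpen_lt continuous_const (hdc1 qm)).inter (isOpen_lt continuous_const (hdc2 qp))
  have hUnhds : {z : X | δ < d qm z ∧ δ < d z qp} ∈ 𝓝 p :=
    hUopen.mem_nhds ⟨hδm, hδp⟩
  have hfreq : ∃ᶠ k in atTop, δ < d qm (γ (bk k)) ∧ δ < d (γ (bk k)) qp := by
    have h1 : (𝓝 p ⊓ Filter.map (fun k => γ (bk k)) atTop).NeBot := hp
    have h2 : (Filter.map (fun k => γ (bk k)) atTop ⊓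
        𝓟 {z : X | δ < d qm z ∧ δ < d z qp}).NeBot :=
      h1.mono (by
        refine le_inf inf_le_right (le_trans inf_le_left (le_principal_iff.mpr hUnhds)))
    rw [← frequently_map (P := fun z : X => δ < d qm z ∧ δ < d z qp)]
    exact frequently_iff_neBot.mpr h2
  obtain ⟨k₀, hk₀⟩ := hfreq.exists
  set t₁ : ℝ := bk k₀ with ht₁def
  have ht₁S : t₁ ∈ S := ⟨(hbk k₀).1, (hbk k₀).2⟩
  -- bounds along the tail of the curve
  have hbound : ∀ t ∈ S, t₁ ≤ t → δ ≤ d qm (γ t) ∧ δ ≤ d (γ t) qp := by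
    intro t htS hle
    constructor
    · rcases eq_or_lt_of_le hle with heq | hlt
      · rw [← heq]; exact hk₀.1.le
      · exact hk₀.1.le.trans ((hγ.2 t₁ ht₁S t htS hlt).1 qm).1
    · have hev : ∀ᶠ j in atTop, t < bk j := by
        have hIoi : Ioi (t : EReal) ∈ 𝓝 b := Ioi_mem_nhds htS.2
        filter_upwards [hbkt hIoi] with j hj using EReal.coe_lt_coe_iff.mp hj
      obtain ⟨j, hjU, hjt⟩ := (hfreq.and_eventually hev).exists
      have hjS : bk j ∈ S := ⟨(hbk j).1, (hbk j).2⟩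
      exact hjU.2.le.trans ((hγ.2 t htS (bk j) hjS hjt).1 qp).2
  -- positivity of d qm qp and choice of r
  have hqmqp : 0 < d qm qp := by
    have h1 := (hbound t₁ ht₁S le_rfl).1
    have h2 := (hbound t₁ ht₁S le_rfl).2
    have := htri qm (γ t₁) qp (lt_of_lt_of_le hδ h1) (lt_of_lt_of_le hδ h2)
    linarith
  obtain ⟨r, hr⟩ := (hnb qp).2
  -- the compact set from axiom (ii)
  set A : Set X := {z : X | 0 < d qm z ∧ 0 < d z r} with hA
  set K : Set (X × X) := {p : X × X | δ ≤ d p.1 p.2} ∩ (closure A ×ˢ closure A) with hK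
  have hKcpt : IsCompact K := hcpt qm r δ hδ
  set L : Set X := Prod.fst '' K with hL
  have hLcpt : IsCompact L := hKcpt.image continuous_fst
  have hqpA : qp ∈ A := ⟨hqmqp, hr⟩
  -- the curve eventually stays in L
  have htail : ∀ t ∈ S, t₁ ≤ t → γ t ∈ L := by
    intro t htS hle
    have h1 := (hbound t htS hle).1
    have h2 := (hbound t htS hle).2
    have hγA : γ t ∈ A := by
      refine ⟨lt_of_lt_of_le hδ h1, ?_⟩
      have := htri (γ t) qp r (lt_of_lt_of_le hδ h2) hr
      linarith [hd0 qp r]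
    exact ⟨(γ t, qp), ⟨h2, subset_closure hγA, subset_closure hqpA⟩, rfl⟩
  set G : Filter X := Filter.map γ F with hG
  have hGne : G.NeBot := hFne.map γ
  have hGL : G ≤ 𝓟 L := by
    rw [hG, le_principal_iff, mem_map]
    filter_upwards [hmemF t₁ ht₁S] with t ht using htail t ht.2 ht.1.le
  -- cluster points of the tail filter are causal upper bounds of the curve
  have hclJ : ∀ q : X, ClusterPt q G → ∀ t ∈ S, Jrel d (γ t) q := by
    intro q hq t htS r0
    have hclosed : IsClosed {z : X | d r0 (γ t) ≤ d r0 z ∧ d z r0 ≤ d (γ t) r0} :=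
      (isClosed_le continuous_const (hdc1 r0)).inter
        (isClosed_le (hdc2 r0) continuous_const)
    have hmem : {z : X | d r0 (γ t) ≤ d r0 z ∧ d z r0 ≤ d (γ t) r0} ∈ G := by
      rw [hG, mem_map]
      filter_upwards [hmemF t htS] with s hs
      exact ⟨((hγ.2 t htS s hs.2 hs.1).1 r0).1, ((hγ.2 t htS s hs.2 hs.1).1 r0).2⟩
    have hcl : ClusterPt q (𝓟 {z : X | d r0 (γ t) ≤ d r0 z ∧ d z r0 ≤ d (γ t) r0}) :=
      hq.mono (le_principal_iff.mpr hmem)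
    have hmemcl := mem_closure_iff_clusterPt.mpr hcl
    rwa [hclosed.closure_eq] at hmemcl
  -- any two cluster points coincide
  have hle2 : ∀ q1 q2 : X, ClusterPt q1 G → ClusterPt q2 G →
      ∀ r0 : X, d r0 q1 ≤ d r0 q2 ∧ d q2 r0 ≤ d q1 r0 := by
    intro q1 q2 h1 h2 r0
    have hclosed : IsClosed {z : X | d r0 z ≤ d r0 q2 ∧ d q2 r0 ≤ d z r0} :=
      (isClosed_le (hdc1 r0) continuous_const).inter
        (isClosed_le continuous_const (hdc2 r0))
    have hmem : {z : X | d r0 z ≤ d r0 q2 ∧ d q2 r0 ≤ d z r0} ∈ G := by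
      rw [hG, mem_map]
      filter_upwards [hmemF t₁ ht₁S] with s hs
      exact ⟨(hclJ q2 h2 s hs.2 r0).1, (hclJ q2 h2 s hs.2 r0).2⟩
    have hcl : ClusterPt q1 (𝓟 {z : X | d r0 z ≤ d r0 q2 ∧ d q2 r0 ≤ d z r0}) :=
      h1.mono (le_principal_iff.mpr hmem)
    have hmemcl := mem_closure_iff_clusterPt.mpr hcl
    rwa [hclosed.closure_eq] at hmemcl
  have huniq : ∀ q1 q2 : X, ClusterPt q1 G → ClusterPt q2 G → q1 = q2 := by
    intro q1 q2 h1 h2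
    by_contra hneq
    obtain ⟨z, hz⟩ := hsep q1 q2 hneq
    rcases hz with hz | hz
    · exact hz (le_antisymm (hle2 q2 q1 h2 h1 z).2 (hle2 q1 q2 h1 h2 z).2)
    · exact hz (le_antisymm (hle2 q1 q2 h1 h2 z).1 (hle2 q2 q1 h2 h1 z).1)
  -- existence of a cluster point, and convergence to it
  obtain ⟨q, hqL, hq⟩ := hLcpt hGL
  have htend : G ≤ 𝓝 q := by
    by_contra hcon
    rw [Filter.le_def] at hcon
    push_neg at hcon
    obtain ⟨U, hU, hUG⟩ := hcon
    have hqint : q ∈ interior U := mem_interior_iff_mem_nhds.mpr hU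
    have hVG : interior U ∉ G := fun hmem => hUG (G.mem_of_superset hmem interior_subset)
    have hne2 : (G ⊓ 𝓟 (interior U)ᶜ).NeBot := by
      rw [neBot_iff]
      intro hbot
      exact hVG (by simpa [compl_compl] using inf_principal_eq_bot.mp hbot)
    haveI := hne2
    obtain ⟨q', hq'L, hq'⟩ := hLcpt (f := G ⊓ 𝓟 (interior U)ᶜ) (le_trans inf_le_left hGL)
    have hq'G : ClusterPt q' G := hq'.mono inf_le_left
    have hq'c : q' ∈ (interior U)ᶜ := by
      have : ClusterPt q' (𝓟 (interior U)ᶜ) := hq'.mono inf_le_right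
      have := mem_closure_iff_clusterPt.mpr this
      rwa [(isClosed_compl_iff.mpr isOpen_interior).closure_eq] at this
    exact hq'c (huniq q' q hq'G hq ▸ hqint)
  exact hne ⟨q, htend⟩

theorem isLMS_swap (T : TopologicalSpace X) (d : X → X → ℝ) (h : IsLMS T d) :
    IsLMS T (fun x y => d y x) := by
  letI := T
  obtain ⟨hd0, htri, ⟨hdc, hcpt⟩, hsep⟩ := h
  refine ⟨fun x y => hd0 y x, fun x y z h1 h2 => by
    simpa [add_comm] using htri z y x h2 h1, ⟨?_, ?_⟩, ?_⟩
  · exact hdc.comp continuous_swap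
  · intro x y ε hε
    have hset : {z : X | 0 < d z x ∧ 0 < d y z} = {z : X | 0 < d y z ∧ 0 < d z x} := by
      ext z; exact and_comm
    have hK := (hcpt y x ε hε).image continuous_swap
    have heq : Prod.swap '' ({p : X × X | ε ≤ d p.1 p.2} ∩
        (closure {z : X | 0 < d y z ∧ 0 < d z x} ×ˢ closure {z : X | 0 < d y z ∧ 0 < d z x})) =
        {p : X × X | ε ≤ d p.2 p.1} ∩
        (closure {z : X | 0 < d y z ∧ 0 < d z x} ×ˢ closure {z : X | 0 < d y z ∧ 0 < d z x}) := by
      rw [Set.image_swap_eq_preimage_swap]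
      ext ⟨u, v⟩
      simp only [Set.mem_preimage, Set.mem_inter_iff, Set.mem_setOf_eq, Set.mem_prod,
        Prod.swap_prod_mk]
      tauto
    rw [heq] at hK
    have hgoal : {p : X × X | ε ≤ d p.2 p.1} ∩
        (closure {z : X | 0 < d z x ∧ 0 < d y z} ×ˢ closure {z : X | 0 < d z x ∧ 0 < d y z}) =
        {p : X × X | ε ≤ d p.2 p.1} ∩
        (closure {z : X | 0 < d y z ∧ 0 < d z x} ×ˢ closure {z : X | 0 < d y z ∧ 0 < d z x}) := by
      rw [hset]
    rw [show {p : X × X | ε ≤ (fun x y => d y x) p.1 p.2} = {p : X × X | ε ≤ d p.2 p.1} from rfl]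
    rw [show {z : X | 0 < (fun x y => d y x) x z ∧ 0 < (fun x y => d y x) z y} =
        {z : X | 0 < d z x ∧ 0 < d y z} from rfl]
    rw [hgoal]
    exact hK
  · intro x y hxy
    obtain ⟨z, hz⟩ := hsep x y hxy
    exact ⟨z, hz.symm⟩


/-- Every Lorentzian metric space without chronological boundary is non-partial
imprisoning: no future inextendible isocausal curve is partially future imprisoned
in a compact set, and dually in the past. -/
theorem lms_non_partial_imprisonment
    (T : TopologicalSpace X) (d : X → X → ℝ)
    (h : IsLMS T d) (hnb : NoBoundary d) :
    (∀ b : EReal, (0 : EReal) < b →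
      ∀ γ : ℝ → X, IsIsocausalOn T d γ {t : ℝ | 0 ≤ t ∧ (t : EReal) < b} →
      (letI := T; ¬∃ p : X, Filter.Tendsto γ
        (Filter.comap (fun t : ℝ => (t : EReal)) (𝓝[<] b)) (𝓝 p)) →
      ∀ C : Set X, (letI := T; IsCompact C) →
      ¬∃ bk : ℕ → ℝ, (∀ k, 0 ≤ bk k ∧ (bk k : EReal) < b) ∧
        Filter.Tendsto (fun k => (bk k : EReal)) Filter.atTop (𝓝 b) ∧
        ∀ k, γ (bk k) ∈ C) ∧
    (∀ a : EReal, a < (0 : EReal) →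
      ∀ γ : ℝ → X, IsIsocausalOn T d γ {t : ℝ | a < (t : EReal) ∧ t ≤ 0} →
      (letI := T; ¬∃ p : X, Filter.Tendsto γ
        (Filter.comap (fun t : ℝ => (t : EReal)) (𝓝[>] a)) (𝓝 p)) →
      ∀ C : Set X, (letI := T; IsCompact C) →
      ¬∃ ak : ℕ → ℝ, (∀ k, a < (ak k : EReal) ∧ ak k ≤ 0) ∧
        Filter.Tendsto (fun k => (ak k : EReal)) Filter.atTop (𝓝 a) ∧
        ∀ k, γ (ak k) ∈ C) := by
  letI := T
  constructor
  · intro b hb γ hγ hne C hC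
    exact lms_key T d h hnb b hb γ hγ hne C hC
  · intro a ha γ hγ hne C hC
    set d' : X → X → ℝ := fun x y => d y x with hd'
    have h' : IsLMS T d' := isLMS_swap T d h
    have hnb' : NoBoundary d' := fun x => ⟨(hnb x).2, (hnb x).1⟩
    set γ' : ℝ → X := fun t => γ (-t) with hγ'def
    have hb' : (0 : EReal) < -a := by
      rw [← neg_zero]
      exact EReal.neg_lt_neg_iff.mpr ha
    have hcoe : ∀ t : ℝ, ((t : EReal) < -a ↔ a < ((-t : ℝ) : EReal)) := by
      intro t
      rw [EReal.coe_neg, EReal.lt_neg_comm]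
    have hmap : ∀ t : ℝ, t ∈ {t : ℝ | 0 ≤ t ∧ (t : EReal) < -a} →
        (-t) ∈ {t : ℝ | a < (t : EReal) ∧ t ≤ 0} := by
      intro t ht
      exact ⟨(hcoe t).mp ht.2, neg_nonpos.mpr ht.1⟩
    have hγ'iso : IsIsocausalOn T d' γ' {t : ℝ | 0 ≤ t ∧ (t : EReal) < -a} := by
      constructor
      · exact hγ.1.comp continuous_neg.continuousOn hmap
      · intro s hs t ht hst
        have h1 := hγ.2 (-t) (hmap t ht) (-s) (hmap s hs) (by linarith)
        exact ⟨fun p0 => ⟨(h1.1 p0).2, (h1.1 p0).1⟩, fun he => h1.2 he.symm⟩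
    have hnegt : Filter.Tendsto (fun t : ℝ => -t)
        (Filter.comap (fun t : ℝ => (t : EReal)) (𝓝[>] a))
        (Filter.comap (fun t : ℝ => (t : EReal)) (𝓝[<] (-a))) := by
      rw [tendsto_comap_iff]
      have h1 : Filter.Tendsto (fun t : ℝ => (t : EReal))
          (Filter.comap (fun t : ℝ => (t : EReal)) (𝓝[>] a)) (𝓝[>] a) := tendsto_comap
      have h2 : Filter.Tendsto (fun x : EReal => -x) (𝓝[>] a) (𝓝[<] (-a)) := by
        rw [nhdsWithin, nhdsWithin]
        exact Filter.Tendsto.inf (continuous_neg.tendsto a)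
          (tendsto_principal_principal.mpr fun x hx => EReal.neg_lt_neg_iff.mpr hx)
      exact h2.comp h1
    have hne' : ¬∃ p : X, Filter.Tendsto γ'
        (Filter.comap (fun t : ℝ => (t : EReal)) (𝓝[<] (-a))) (𝓝 p) := by
      rintro ⟨p, hp⟩
      apply hne
      refine ⟨p, ?_⟩
      have hcomp := hp.comp hnegt
      have hfun : γ' ∘ (fun t : ℝ => -t) = γ := by
        funext t
        simp [hγ'def]
      rwa [hfun] at hcomp
    have hkey := lms_key T d' h' hnb' (-a) hb' γ' hγ'iso hne' C hC
    rintro ⟨ak, hak, hakt, hakC⟩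
    apply hkey
    refine ⟨fun k => -(ak k), fun k => ⟨neg_nonneg.mpr (hak k).2, ?_⟩, ?_, fun k => ?_⟩
    · rw [EReal.coe_neg]
      exact EReal.neg_lt_neg_iff.mpr (hak k).1
    · have hneg : Filter.Tendsto (fun x : EReal => -x) (𝓝 a) (𝓝 (-a)) :=
        continuous_neg.tendsto a
      exact hneg.comp hakt
    · show γ' (-(ak k)) ∈ C
      simpa [hγ'def] using hakC k
end

section
/- Let (X,d) be a countably generated Lorentzian metric space and let (x_n)_{n≥1} be a sequence that is dense in X. Then the function τ(x) = Σ_{n=1}^∞ 2^{−n} ( d(x_n, x)/(1 + d(x_n, x)) − d(x, x_n)/(1 + d(x, x_n)) ) is well defined with values in [−1,1], continuous, and is a time function: x < y implies τ(x) < τ(y). -/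
open Filter Topology Set

variable {X : Type*}

private lemma gq_nonneg {t : ℝ} (ht : 0 ≤ t) : 0 ≤ t / (1 + t) :=
  div_nonneg ht (by linarith)

private lemma gq_lt_one {t : ℝ} (ht : 0 ≤ t) : t / (1 + t) < 1 :=
  (div_lt_one (by linarith)).2 (by linarith)

private lemma gq_mono {a b : ℝ} (ha : 0 ≤ a) (hab : a ≤ b) :
    a / (1 + a) ≤ b / (1 + b) := by
  rw [div_le_div_iff₀ (by linarith) (by linarith)]; nlinarith

private lemma gq_strict {a b : ℝ} (ha : 0 ≤ a) (hab : a < b) :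
    a / (1 + a) < b / (1 + b) := by
  rw [div_lt_div_iff₀ (by linarith) (by linarith)]; nlinarith

set_option maxHeartbeats 1000000 in
/-- The explicit series built from a dense sequence in a countably generated
Lorentzian metric space is well defined (summable) with values in `[-1,1]`,
continuous, and a time function. -/
theorem lms_explicit_time_function
    (T : TopologicalSpace X) (d : X → X → ℝ)
    (h : IsLMS T d) (hcg : CountablyGenerated d)
    (x_ : ℕ → X) (hdense : letI := T; Dense (Set.range x_)) :
    (∀ x : X, Summable fun n : ℕ =>
      ((2 : ℝ)⁻¹) ^ (n + 1) *
        (d (x_ n) x / (1 + d (x_ n) x) - d x (x_ n) / (1 + d x (x_ n)))) ∧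
    (∀ x : X,
      (∑' n : ℕ, ((2 : ℝ)⁻¹) ^ (n + 1) *
        (d (x_ n) x / (1 + d (x_ n) x) - d x (x_ n) / (1 + d x (x_ n))))
        ∈ Set.Icc (-1 : ℝ) 1) ∧
    (letI := T; Continuous fun x : X =>
      ∑' n : ℕ, ((2 : ℝ)⁻¹) ^ (n + 1) *
        (d (x_ n) x / (1 + d (x_ n) x) - d x (x_ n) / (1 + d x (x_ n)))) ∧
    (∀ x y : X, CausalLt d x y →
      (∑' n : ℕ, ((2 : ℝ)⁻¹) ^ (n + 1) *
        (d (x_ n) x / (1 + d (x_ n) x) - d x (x_ n) / (1 + d x (x_ n)))) <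
      (∑' n : ℕ, ((2 : ℝ)⁻¹) ^ (n + 1) *
        (d (x_ n) y / (1 + d (x_ n) y) - d y (x_ n) / (1 + d y (x_ n))))) := by
  classical
  obtain ⟨hnn, htri, ⟨hdcont, hcomp⟩, hsep⟩ := h
  letI := T
  set f : ℕ → X → ℝ := fun n x =>
    ((2 : ℝ)⁻¹) ^ (n + 1) *
      (d (x_ n) x / (1 + d (x_ n) x) - d x (x_ n) / (1 + d x (x_ n))) with hf
  have hbound : ∀ n x, ‖f n x‖ ≤ ((2 : ℝ)⁻¹) ^ (n + 1) := by
    intro n x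
    have h1 := gq_nonneg (hnn (x_ n) x)
    have h2 := gq_lt_one (hnn (x_ n) x)
    have h3 := gq_nonneg (hnn x (x_ n))
    have h4 := gq_lt_one (hnn x (x_ n))
    have hc : (0 : ℝ) ≤ ((2 : ℝ)⁻¹) ^ (n + 1) := by positivity
    calc ‖f n x‖ = ((2 : ℝ)⁻¹) ^ (n + 1) *
          |d (x_ n) x / (1 + d (x_ n) x) - d x (x_ n) / (1 + d x (x_ n))| := by
          rw [hf]; simp [abs_mul, abs_of_nonneg hc]
      _ ≤ ((2 : ℝ)⁻¹) ^ (n + 1) * 1 := by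
          apply mul_le_mul_of_nonneg_left _ hc
          rw [abs_le]; constructor <;> linarith
      _ = ((2 : ℝ)⁻¹) ^ (n + 1) := mul_one _
  have hu : Summable (fun n : ℕ => ((2 : ℝ)⁻¹) ^ (n + 1)) := by
    have : Summable (fun n : ℕ => ((2 : ℝ)⁻¹) ^ n) :=
      summable_geometric_of_lt_one (by norm_num) (by norm_num)
    simpa [pow_succ] using this.mul_right (2 : ℝ)⁻¹
  have husum : (∑' n : ℕ, ((2 : ℝ)⁻¹) ^ (n + 1)) = 1 := by
    have hg : (∑' n : ℕ, ((2 : ℝ)⁻¹ : ℝ) ^ n) = (1 - 2⁻¹)⁻¹ :=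
      tsum_geometric_of_lt_one (by norm_num) (by norm_num)
    have : (∑' n : ℕ, ((2 : ℝ)⁻¹) ^ (n + 1)) =
        (∑' n : ℕ, ((2 : ℝ)⁻¹) ^ n) * 2⁻¹ := by
      rw [← tsum_mul_right]; simp [pow_succ]
    rw [this, hg]; norm_num
  have hsum : ∀ x, Summable (fun n => f n x) := fun x =>
    Summable.of_norm_bounded hu (fun n => hbound n x)
  have hcont1 : ∀ n : ℕ, Continuous fun x : X => d (x_ n) x :=
    fun n => hdcont.comp (continuous_const.prodMk continuous_id)
  have hcont2 : ∀ n : ℕ, Continuous fun x : X => d x (x_ n) :=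
    fun n => hdcont.comp (continuous_id.prodMk continuous_const)
  have hfcont : ∀ n, Continuous (f n) := by
    intro n
    apply continuous_const.mul
    apply Continuous.sub
    · exact (hcont1 n).div (continuous_const.add (hcont1 n))
        (fun x => by have := hnn (x_ n) x; positivity)
    · exact (hcont2 n).div (continuous_const.add (hcont2 n))
        (fun x => by have := hnn x (x_ n); positivity)
  refine ⟨hsum, ?_, ?_, ?_⟩
  · intro x
    have hhs : HasSum (fun n : ℕ => ((2 : ℝ)⁻¹) ^ (n + 1)) 1 := husum ▸ hu.hasSum
    have habs : ‖∑' n, f n x‖ ≤ 1 := tsum_of_norm_bounded hhs (fun n => hbound n x)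
    rw [Real.norm_eq_abs] at habs
    exact abs_le.1 habs
  · exact continuous_tsum hfcont hu (fun n x => hbound n x)
  · rintro x y ⟨hJ, hxy⟩
    -- termwise monotone
    have hmono : ∀ n, f n x ≤ f n y := by
      intro n
      have h1 : d (x_ n) x ≤ d (x_ n) y := (hJ (x_ n)).1
      have h2 : d y (x_ n) ≤ d x (x_ n) := (hJ (x_ n)).2
      have g1 := gq_mono (hnn (x_ n) x) h1
      have g2 := gq_mono (hnn y (x_ n)) h2
      have hc : (0 : ℝ) ≤ ((2 : ℝ)⁻¹) ^ (n + 1) := by positivity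
      exact mul_le_mul_of_nonneg_left (by linarith) hc
    -- a strict index
    obtain ⟨z, hz⟩ := hsep x y hxy
    have hz' : d z x < d z y ∨ d y z < d x z := by
      rcases hz with h | h
      · exact Or.inr (lt_of_le_of_ne (hJ z).2 (fun he => h he.symm))
      · exact Or.inl (lt_of_le_of_ne (hJ z).1 h)
    have hstrict : ∃ n, f n x < f n y := by
      have hcA : Continuous fun w : X => d w x :=
        hdcont.comp (continuous_id.prodMk continuous_const)
      have hcB : Continuous fun w : X => d w y :=
        hdcont.comp (continuous_id.prodMk continuous_const)
      have hcC : Continuous fun w : X => d y w :=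
        hdcont.comp (continuous_const.prodMk continuous_id)
      have hcD : Continuous fun w : X => d x w :=
        hdcont.comp (continuous_const.prodMk continuous_id)
      rcases hz' with h | h
      · have hU : IsOpen {w : X | d w x < d w y} := isOpen_lt hcA hcB
        obtain ⟨a, ha, haU⟩ := hdense.exists_mem_open hU ⟨z, h⟩
        obtain ⟨n, rfl⟩ := ha
        refine ⟨n, ?_⟩
        have g1 := gq_strict (hnn (x_ n) x) haU
        have g2 := gq_mono (hnn y (x_ n)) (hJ (x_ n)).2
        have hc : (0 : ℝ) < ((2 : ℝ)⁻¹) ^ (n + 1) := by positivity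
        exact mul_lt_mul_of_pos_left (by linarith) hc
      · have hU : IsOpen {w : X | d y w < d x w} := isOpen_lt hcC hcD
        obtain ⟨a, ha, haU⟩ := hdense.exists_mem_open hU ⟨z, h⟩
        obtain ⟨n, rfl⟩ := ha
        refine ⟨n, ?_⟩
        have g1 := gq_mono (hnn (x_ n) x) (hJ (x_ n)).1
        have g2 := gq_strict (hnn y (x_ n)) haU
        have hc : (0 : ℝ) < ((2 : ℝ)⁻¹) ^ (n + 1) := by positivity
        exact mul_lt_mul_of_pos_left (by linarith) hc
    obtain ⟨n, hn⟩ := hstrict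
    exact Summable.tsum_lt_tsum hmono hn (hsum x) (hsum y)
end
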